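/- arXiv:1104.5324 — 4 statements merged into one kernel-verified Lean document; each statement's English description precedes it below -/
import Mathlib

section
/- Let A ⊆ (Fin (k+1) → ℤ), let l ∈ ℤ, and set A_l = {b ∈ A : b (Fin.last k) ≤ l}. Write p(v) = v ∘ Fin.castSucc and v_last = v (Fin.last k). Suppose a ∈ A_l satisfies: (i) p(a) is Pareto-minimal in p(A_l) = {p(b) : b ∈ A_l}, and (ii) a_last ≤ b_last for every b ∈ A_l with p(b) = p(a). Then a is Pareto-minimal in the full set A (not merely in A_l). -/
/-- The set of Pareto-minimal (nondominated) elements of a set `A` of objective vectors,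
with respect to the componentwise order on `Fin k → ℤ`. -/
def paretoMin {k : ℕ} (A : Set (Fin k → ℤ)) : Set (Fin k → ℤ) :=
  {a ∈ A | ∀ b ∈ A, ¬ b < a}

/-- For any value of the bound `l`, each solution of the CLMOIP problem (whose projection
to the first `k` coordinates is Pareto-minimal in the projected image of
`A_l = {b ∈ A | b (Fin.last k) ≤ l}`, and which minimizes the last coordinate among all
elements of `A_l` with the same projection) is Pareto-minimal in the full set `A`, not
merely in `A_l`. -/
theorem clmoip_constrained_paretoMin {k : ℕ} (A : Set (Fin (k + 1) → ℤ)) (l : ℤ)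
    (a : Fin (k + 1) → ℤ)
    (ha : a ∈ {b ∈ A | b (Fin.last k) ≤ l})
    (h1 : (a ∘ Fin.castSucc) ∈
      paretoMin ((fun v : Fin (k + 1) → ℤ => v ∘ Fin.castSucc) ''
        {b ∈ A | b (Fin.last k) ≤ l}))
    (h2 : ∀ b ∈ {b ∈ A | b (Fin.last k) ≤ l},
      b ∘ Fin.castSucc = a ∘ Fin.castSucc → a (Fin.last k) ≤ b (Fin.last k)) :
    a ∈ paretoMin A := by
  obtain ⟨haA, hal⟩ := ha
  refine ⟨haA, fun b hbA hba => ?_⟩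
  obtain ⟨hble, hne⟩ := lt_iff_le_and_ne.mp hba
  have hbl : b (Fin.last k) ≤ l := le_trans (hble _) hal
  have hbAl : b ∈ {b ∈ A | b (Fin.last k) ≤ l} := ⟨hbA, hbl⟩
  have hple : b ∘ Fin.castSucc ≤ a ∘ Fin.castSucc := fun i => hble _
  rcases eq_or_lt_of_le hple with heq | hlt
  · have := h2 b hbAl heq
    apply hne
    funext i
    refine Fin.lastCases ?_ (fun j => congrFun heq j) i
    exact le_antisymm (hble _) this
  · exact h1.2 _ ⟨b, hbAl, rfl⟩ hlt
end

section
/- Let A ⊆ (Fin (k+1) → ℤ) and a ∈ A. Write p(v) = v ∘ Fin.castSucc, v_last = v (Fin.last k), and A_{a} = {b ∈ A : b_last ≤ a_last}. Then a is Pareto-minimal in A if and only if both: (i) p(a) is Pareto-minimal in p(A_a) = {p(b) : b ∈ A_a}, and (ii) a_last ≤ b_last for every b ∈ A_a with p(b) = p(a). In other words, the nondominated vectors of A are exactly the vectors recovered by solving the CLMOIP problem with bound l taken equal to their own last objective value. -/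
/-- Correctness characterization for the recursive algorithm: `a ∈ A` is Pareto-minimal in
`A` if and only if, setting `A_a = {b ∈ A | b (Fin.last k) ≤ a (Fin.last k)}`, the
projection of `a` to the first `k` coordinates is Pareto-minimal in the projected image of
`A_a`, and `a` minimizes the last coordinate among all `b ∈ A_a` with the same projection.
That is, the nondominated vectors of `A` are exactly the vectors recovered by solving the
CLMOIP problem with bound `l` equal to their own last objective value. -/
theorem paretoMin_iff_clmoip {k : ℕ} (A : Set (Fin (k + 1) → ℤ))
    (a : Fin (k + 1) → ℤ) (ha : a ∈ A) :
    a ∈ paretoMin A ↔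
      ((a ∘ Fin.castSucc) ∈
        paretoMin ((fun v : Fin (k + 1) → ℤ => v ∘ Fin.castSucc) ''
          {b ∈ A | b (Fin.last k) ≤ a (Fin.last k)}) ∧
      ∀ b ∈ {b ∈ A | b (Fin.last k) ≤ a (Fin.last k)},
        b ∘ Fin.castSucc = a ∘ Fin.castSucc → a (Fin.last k) ≤ b (Fin.last k)) := by
  constructor
  · rintro ⟨-, hmin⟩
    constructor
    · refine ⟨⟨a, ⟨ha, le_refl _⟩, rfl⟩, ?_⟩
      rintro c ⟨b, ⟨hbA, hbl⟩, rfl⟩ hlt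
      apply hmin b hbA
      obtain ⟨hle, hnle⟩ := lt_iff_le_not_ge.mp hlt
      constructor
      · intro i
        induction i using Fin.lastCases with
        | last => exact hbl
        | cast i => exact hle i
      · intro h
        exact hnle fun i => h (Fin.castSucc i)
    · rintro b ⟨hbA, hbl⟩ hproj
      by_contra h
      push_neg at h
      apply hmin b hbA
      constructor
      · intro i
        induction i using Fin.lastCases with
        | last => exact hbl
        | cast i => exact (congrFun hproj i).le
      · intro hab
        exact absurd (hab (Fin.last k)) (not_le.mpr h)
  · rintro ⟨⟨-, hpmin⟩, hlast⟩
    refine ⟨ha, fun b hbA hlt => ?_⟩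
    obtain ⟨hle, hnle⟩ := lt_iff_le_not_ge.mp hlt
    have hbl : b (Fin.last k) ≤ a (Fin.last k) := hle (Fin.last k)
    have hple : (b ∘ Fin.castSucc) ≤ (a ∘ Fin.castSucc) := fun i => hle (Fin.castSucc i)
    have hnplt : ¬ (b ∘ Fin.castSucc) < (a ∘ Fin.castSucc) :=
      hpmin _ ⟨b, ⟨hbA, hbl⟩, rfl⟩
    have hpeq : (b ∘ Fin.castSucc) = (a ∘ Fin.castSucc) :=
      le_antisymm hple (by
        by_contra h
        exact hnplt (lt_iff_le_not_ge.mpr ⟨hple, h⟩))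
    have := hlast b ⟨hbA, hbl⟩ hpeq
    apply hnle
    intro i
    induction i using Fin.lastCases with
    | last => exact this
    | cast i => exact (congrFun hpeq i).ge
end

section
/- Let A ⊆ (Fin (k+1) → ℤ) be finite, let l ∈ ℤ, and set A_l = {b ∈ A : b (Fin.last k) ≤ l}. Write p(v) = v ∘ Fin.castSucc and v_last = v (Fin.last k). Define the CLMOIP solution set S = {a ∈ A_l : p(a) is Pareto-minimal in p(A_l) and a_last ≤ b_last for every b ∈ A_l with p(b) = p(a)}. Let M ∈ ℤ satisfy s_last ≤ M for every s ∈ S. Then every Pareto-minimal element v of A with M ≤ v_last ≤ l belongs to S. -/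
/-- The CLMOIP solution set with bound `l`: those `a` in `A_l = {b ∈ A | b_last ≤ l}` whose
projection to the first `k` coordinates is Pareto-minimal in the projected image of `A_l`,
and which minimize the last coordinate among all elements of `A_l` with the same
projection. -/
def clmoipSol {k : ℕ} (A : Set (Fin (k + 1) → ℤ)) (l : ℤ) : Set (Fin (k + 1) → ℤ) :=
  {a ∈ {b ∈ A | b (Fin.last k) ≤ l} |
    (a ∘ Fin.castSucc) ∈
      paretoMin ((fun v : Fin (k + 1) → ℤ => v ∘ Fin.castSucc) ''
        {b ∈ A | b (Fin.last k) ≤ l}) ∧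
    ∀ b ∈ {b ∈ A | b (Fin.last k) ≤ l},
      b ∘ Fin.castSucc = a ∘ Fin.castSucc → a (Fin.last k) ≤ b (Fin.last k)}

theorem exists_clmoip_le {k : ℕ} (A : Set (Fin (k + 1) → ℤ)) (hA : A.Finite) (l : ℤ)
    (b : Fin (k + 1) → ℤ) (hb : b ∈ A) (hbl : b (Fin.last k) ≤ l) :
    ∃ s ∈ clmoipSol A l, (s ∘ Fin.castSucc) ≤ (b ∘ Fin.castSucc) ∧
      (s ∘ Fin.castSucc = b ∘ Fin.castSucc → s (Fin.last k) ≤ b (Fin.last k)) := by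
  set Al : Set (Fin (k + 1) → ℤ) := {c ∈ A | c (Fin.last k) ≤ l} with hAldef
  have hAlfin : Al.Finite := hA.subset fun c hc => hc.1
  set D : Set (Fin (k + 1) → ℤ) := {c ∈ Al | c ∘ Fin.castSucc ≤ b ∘ Fin.castSucc} with hDdef
  have hDfin : D.Finite := hAlfin.subset fun c hc => hc.1
  have hDne : D.Nonempty := ⟨b, ⟨⟨hb, hbl⟩, le_refl _⟩⟩
  obtain ⟨m, hmD, hmmin⟩ :=
    (show ∃ a ∈ D, ∀ a' ∈ D, (fun c => c ∘ Fin.castSucc) a' ≤ (fun c => c ∘ Fin.castSucc) a → (fun c => c ∘ Fin.castSucc) a = (fun c => c ∘ Fin.castSucc) a' by obtain ⟨m, hm, hmin⟩ := Set.Finite.exists_minimalFor (fun c => c ∘ Fin.castSucc) D hDfin hDne; exact ⟨m, hm, fun c hc hle => le_antisymm (hmin hc hle) hle⟩)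
  set E : Set (Fin (k + 1) → ℤ) := {c ∈ Al | c ∘ Fin.castSucc = m ∘ Fin.castSucc} with hEdef
  have hEfin : E.Finite := hAlfin.subset fun c hc => hc.1
  have hEne : E.Nonempty := ⟨m, hmD.1, rfl⟩
  obtain ⟨s, hsE, hsmin⟩ :=
    (show ∃ a ∈ E, ∀ a' ∈ E, (fun c => c (Fin.last k)) a' ≤ (fun c => c (Fin.last k)) a → (fun c => c (Fin.last k)) a = (fun c => c (Fin.last k)) a' by obtain ⟨m, hm, hmin⟩ := Set.Finite.exists_minimalFor (fun c => c (Fin.last k)) E hEfin hEne; exact ⟨m, hm, fun c hc hle => le_antisymm (hmin hc hle) hle⟩)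
  have hslast : ∀ c ∈ E, s (Fin.last k) ≤ c (Fin.last k) := by
    intro c hc
    by_contra h
    push_neg at h
    exact absurd (hsmin c hc h.le) h.ne'
  -- no element of Al projects strictly below m
  have hnodom : ∀ c ∈ Al, ¬ (c ∘ Fin.castSucc) < (m ∘ Fin.castSucc) := by
    intro c hc hlt
    have hcD : c ∈ D := ⟨hc, le_trans hlt.le hmD.2⟩
    exact hlt.ne' (hmmin c hcD hlt.le)
  have hsproj : s ∘ Fin.castSucc = m ∘ Fin.castSucc := hsE.2
  have hsSol : s ∈ clmoipSol A l := by
    refine ⟨hsE.1, ⟨⟨s, hsE.1, rfl⟩, ?_⟩, ?_⟩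
    · rintro x ⟨c, hc, rfl⟩ hlt
      rw [hsproj] at hlt
      exact hnodom c hc hlt
    · intro c hc hceq
      exact hslast c ⟨hc, hceq.trans hsproj⟩
  refine ⟨s, hsSol, ?_, ?_⟩
  · rw [hsproj]; exact hmD.2
  · intro heq
    exact hslast b ⟨⟨hb, hbl⟩, heq.symm.trans hsproj⟩

/-- Key feature of CLMOIP: if `A` is finite and `M` is an upper bound on the last objective
value amongst all CLMOIP solutions with bound `l`, then every Pareto-minimal element `v`
of `A` with `M ≤ v_last ≤ l` belongs to the CLMOIP solution set.  This justifies replacing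
the bound `l` by `M - 1` in subsequent runs. -/
theorem clmoip_captures_range {k : ℕ} (A : Set (Fin (k + 1) → ℤ)) (hA : A.Finite)
    (l M : ℤ) (hM : ∀ s ∈ clmoipSol A l, s (Fin.last k) ≤ M)
    (v : Fin (k + 1) → ℤ) (hv : v ∈ paretoMin A)
    (hMv : M ≤ v (Fin.last k)) (hvl : v (Fin.last k) ≤ l) :
    v ∈ clmoipSol A l := by
  obtain ⟨hvA, hvmin⟩ := hv
  -- helper: from s with projection ≤ and strict somewhere or strict last, get contradiction
  have key : ∀ b ∈ A, b (Fin.last k) ≤ l →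
      (b ∘ Fin.castSucc) ≤ (v ∘ Fin.castSucc) →
      (b ∘ Fin.castSucc ≠ v ∘ Fin.castSucc ∨ b (Fin.last k) < v (Fin.last k)) → False := by
    intro b hb hbl hle hstrict
    obtain ⟨s, hsSol, hsle, hseq⟩ := exists_clmoip_le A hA l b hb hbl
    have hsM : s (Fin.last k) ≤ v (Fin.last k) := le_trans (hM s hsSol) hMv
    have hsv : s < v := by
      have hsproj : (s ∘ Fin.castSucc) ≤ (v ∘ Fin.castSucc) := le_trans hsle hle
      have hle' : s ≤ v := by
        intro i
        induction i using Fin.lastCases with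
        | last => exact hsM
        | cast j => exact hsproj j
      refine lt_of_le_of_ne hle' ?_
      rintro rfl
      rcases hstrict with h | h
      · exact h (le_antisymm hle hsle)
      · have := hseq (le_antisymm hsle hle)
        omega
    exact hvmin s hsSol.1.1 hsv
  refine ⟨⟨hvA, hvl⟩, ⟨⟨v, ⟨hvA, hvl⟩, rfl⟩, ?_⟩, ?_⟩
  · rintro x ⟨c, hc, rfl⟩ hlt
    exact key c hc.1 hc.2 hlt.le (Or.inl hlt.ne)
  · intro c hc hceq
    by_contra h
    push_neg at h
    exact key c hc.1 hc.2 hceq.le (Or.inr h)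
end

section
/- Let A ⊆ (Fin (k+1) → ℤ) be finite, let l ∈ ℤ, and set A_l = {b ∈ A : b (Fin.last k) ≤ l}, assumed nonempty. Let N_l denote the set of Pareto-minimal elements of A_l and let M ∈ ℤ be the maximum of a (Fin.last k) over a ∈ N_l (i.e., a (Fin.last k) ≤ M for all a ∈ N_l, with equality attained by some a ∈ N_l). Let N_{M−1} denote the set of Pareto-minimal elements of {b ∈ A : b (Fin.last k) ≤ M − 1}. Then N_l is the disjoint union of N_{M−1} and {a ∈ N_l : a (Fin.last k) = M}. -/
lemma mem_paretoMin_of_minimal {k : ℕ} {A : Set (Fin k → ℤ)} {a : Fin k → ℤ}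
    (h : Minimal (· ∈ A) a) : a ∈ paretoMin A :=
  ⟨h.1, fun b hb hba => hba.ne (le_antisymm hba.le (h.2 hb hba.le))⟩

/-- The decomposition underlying the iteration of the recursive algorithm: if `A` is
finite, `A_l = {b ∈ A | b_last ≤ l}` is nonempty, `N_l` is its nondominated set and `M` is
the maximum of the last objective value over `N_l`, then `N_l` is the disjoint union of
`N_{M-1}` (the nondominated set of `{b ∈ A | b_last ≤ M - 1}`) and
`{a ∈ N_l | a_last = M}`.  Hence lowering the bound to `M - 1` loses no nondominated
vectors. -/
theorem paretoMin_decomposition {k : ℕ} (A : Set (Fin (k + 1) → ℤ)) (hA : A.Finite)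
    (l M : ℤ) (hne : {b ∈ A | b (Fin.last k) ≤ l}.Nonempty)
    (hub : ∀ a ∈ paretoMin {b ∈ A | b (Fin.last k) ≤ l}, a (Fin.last k) ≤ M)
    (hatt : ∃ a ∈ paretoMin {b ∈ A | b (Fin.last k) ≤ l}, a (Fin.last k) = M) :
    paretoMin {b ∈ A | b (Fin.last k) ≤ l} =
      paretoMin {b ∈ A | b (Fin.last k) ≤ M - 1} ∪
        {a ∈ paretoMin {b ∈ A | b (Fin.last k) ≤ l} | a (Fin.last k) = M} ∧
    Disjoint (paretoMin {b ∈ A | b (Fin.last k) ≤ M - 1})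
      {a ∈ paretoMin {b ∈ A | b (Fin.last k) ≤ l} | a (Fin.last k) = M} := by
  obtain ⟨a₀, ha₀, ha₀M⟩ := hatt
  have hMl : M ≤ l := ha₀M ▸ ha₀.1.2
  have hSl : ({b ∈ A | b (Fin.last k) ≤ l} : Set _).Finite := hA.subset (fun x hx => hx.1)
  -- N_{M-1} ⊆ N_l
  have h1 : paretoMin {b ∈ A | b (Fin.last k) ≤ M - 1} ⊆
      paretoMin {b ∈ A | b (Fin.last k) ≤ l} := by
    rintro a ⟨⟨haA, haM⟩, hmin⟩
    refine ⟨⟨haA, haM.trans (by linarith)⟩, ?_⟩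
    rintro b hb hba
    obtain ⟨c, hca, hcmin⟩ := (Set.Finite.isPWO hSl).exists_le_minimal hb
    have hc : c ∈ paretoMin {b ∈ A | b (Fin.last k) ≤ l} := mem_paretoMin_of_minimal hcmin
    have hclt : c < a := lt_of_le_of_lt hca hba
    exact hmin c ⟨hcmin.1.1, le_trans (hclt.le (Fin.last k)) haM⟩ hclt
  constructor
  · apply Set.Subset.antisymm
    · rintro a ha
      by_cases hM : a (Fin.last k) = M
      · exact Or.inr ⟨ha, hM⟩
      · left
        have haM : a (Fin.last k) ≤ M - 1 := by
          have := hub a ha; omega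
        exact ⟨⟨ha.1.1, haM⟩, fun b hb hba =>
          ha.2 b ⟨hb.1, hb.2.trans (by linarith)⟩ hba⟩
    · rintro a (ha | ha)
      · exact h1 ha
      · exact ha.1
  · rw [Set.disjoint_left]
    rintro a ⟨⟨_, haM⟩, _⟩ ⟨_, haM'⟩
    omega
end
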